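/- Let m ≥ 1 and let V = { [[Z, W],[-W̄, Z̄]] : Z, W ∈ M_m(ℂ) } ⊆ M_{2m}(ℂ) be the real subspace of complex 2m×2m matrices of quaternion type (of real dimension 4m²), where W̄ denotes entrywise complex conjugation. For S ∈ V, the map T ↦ S·T·S maps V to itself, and its determinant as an ℝ-linear endomorphism of V equals (det S)^{4m} (note det S is a real number for S ∈ V). -/

import Mathlib

open Matrix

/-- The real subspace of complex `2m × 2m` matrices of quaternion type
`[[Z, W], [-W̄, Z̄]]`. -/
noncomputable def quatMatrices (m : ℕ) :
    Submodule ℝ (Matrix (Fin m ⊕ Fin m) (Fin m ⊕ Fin m) ℂ) where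
  carrier := {S | ∃ Z W : Matrix (Fin m) (Fin m) ℂ,
    S = Matrix.fromBlocks Z W (-(W.map (starRingEnd ℂ))) (Z.map (starRingEnd ℂ))}
  add_mem' := by
    rintro a b ⟨Z1, W1, rfl⟩ ⟨Z2, W2, rfl⟩
    refine ⟨Z1 + Z2, W1 + W2, ?_⟩
    rw [Matrix.fromBlocks_add,
      Matrix.map_add (starRingEnd ℂ) (fun a b => by simp) Z1 Z2,
      Matrix.map_add (starRingEnd ℂ) (fun a b => by simp) W1 W2, neg_add]
  zero_mem' := by
    refine ⟨0, 0, ?_⟩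
    ext i j
    cases i <;> cases j <;> simp
  smul_mem' := by
    rintro c a ⟨Z, W, rfl⟩
    refine ⟨c • Z, c • W, ?_⟩
    ext i j
    cases i <;> cases j <;>
      simp [Matrix.smul_apply, Matrix.map_apply, Matrix.neg_apply, Complex.real_smul,
        _root_.map_mul, Complex.conj_ofReal]


variable {m : ℕ}

private noncomputable def quatMk (m : ℕ) :
    (Matrix (Fin m) (Fin m) ℂ × Matrix (Fin m) (Fin m) ℂ) →ₗ[ℝ]
      Matrix (Fin m ⊕ Fin m) (Fin m ⊕ Fin m) ℂ where
  toFun p := Matrix.fromBlocks p.1 p.2 (-(p.2.map (starRingEnd ℂ))) (p.1.map (starRingEnd ℂ))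
  map_add' p q := by
    ext i j
    cases i <;> cases j <;> simp <;> ring
  map_smul' c p := by
    ext i j
    cases i <;> cases j <;>
      simp [Complex.real_smul, _root_.map_mul, Complex.conj_ofReal]

private lemma quatMk_mem (p) : quatMk m p ∈ quatMatrices m := ⟨p.1, p.2, rfl⟩

private lemma quat_mul_mem {S T : Matrix (Fin m ⊕ Fin m) (Fin m ⊕ Fin m) ℂ}
    (hS : S ∈ quatMatrices m) (hT : T ∈ quatMatrices m) : S * T ∈ quatMatrices m := by
  obtain ⟨Z, W, rfl⟩ := hS
  obtain ⟨Z', W', rfl⟩ := hT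
  refine ⟨Z * Z' - W * W'.map (starRingEnd ℂ), Z * W' + W * Z'.map (starRingEnd ℂ), ?_⟩
  have hmm : ∀ (A B : Matrix (Fin m) (Fin m) ℂ),
      (A * B).map (starRingEnd ℂ) = A.map (starRingEnd ℂ) * B.map (starRingEnd ℂ) :=
    fun A B => Matrix.map_mul
  have hcc : ∀ (A : Matrix (Fin m) (Fin m) ℂ),
      (A.map (starRingEnd ℂ)).map (starRingEnd ℂ) = A := by
    intro A; ext i j; simp
  have h11 : Z * Z' + W * -(W'.map (starRingEnd ℂ))
      = Z * Z' - W * W'.map (starRingEnd ℂ) := by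
    rw [mul_neg, sub_eq_add_neg]
  have h21 : -(W.map (starRingEnd ℂ)) * Z' + (Z.map (starRingEnd ℂ)) * -(W'.map (starRingEnd ℂ))
      = -((Z * W' + W * Z'.map (starRingEnd ℂ)).map (starRingEnd ℂ)) := by
    rw [Matrix.map_add _ (fun a b => by simp), hmm, hmm, hcc]
    simp only [mul_neg, neg_mul, neg_add]
    abel
  have h22 : -(W.map (starRingEnd ℂ)) * W' + (Z.map (starRingEnd ℂ)) * (Z'.map (starRingEnd ℂ))
      = ((Z * Z' - W * W'.map (starRingEnd ℂ)).map (starRingEnd ℂ)) := by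
    rw [Matrix.map_sub _ (fun a b => by simp), hmm, hmm, hcc]
    simp only [neg_mul, sub_eq_add_neg]
    abel
  rw [Matrix.fromBlocks_multiply, h11, h21, h22]

private noncomputable def quatEquiv (m : ℕ) :
    (Matrix (Fin m) (Fin m) ℂ × Matrix (Fin m) (Fin m) ℂ) ≃ₗ[ℝ] quatMatrices m := by
  refine LinearEquiv.ofBijective
    ((quatMk m).codRestrict (quatMatrices m) quatMk_mem) ⟨?_, ?_⟩
  · intro p q h
    have h' : quatMk m p = quatMk m q := congrArg Subtype.val h
    have h11 := congrArg Matrix.toBlocks₁₁ h'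
    have h12 := congrArg Matrix.toBlocks₁₂ h'
    simp only [quatMk, LinearMap.coe_mk, AddHom.coe_mk, Matrix.toBlocks_fromBlocks₁₁,
      Matrix.toBlocks_fromBlocks₁₂] at h11 h12
    exact Prod.ext h11 h12
  · rintro ⟨S, Z, W, rfl⟩
    exact ⟨(Z, W), rfl⟩

private lemma coe_quatEquiv (p) :
    ((quatEquiv m p : quatMatrices m) : Matrix (Fin m ⊕ Fin m) (Fin m ⊕ Fin m) ℂ)
      = quatMk m p := rfl

/-- index type for bases -/
abbrev qIdx (m : ℕ) := (Fin 2 × (Fin m × Fin m)) ⊕ (Fin 2 × (Fin m × Fin m))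

private noncomputable def quatBasis (m : ℕ) : Module.Basis (qIdx m) ℝ (quatMatrices m) :=
  ((Complex.basisOneI.smulTower (Matrix.stdBasis ℂ (Fin m) (Fin m))).prod
    (Complex.basisOneI.smulTower (Matrix.stdBasis ℂ (Fin m) (Fin m)))).map (quatEquiv m)

private lemma coe_mem_spanR (x : quatMatrices m) :
    (x : Matrix (Fin m ⊕ Fin m) (Fin m ⊕ Fin m) ℂ) ∈ Submodule.span ℝ
      (Set.range fun k : qIdx m =>
        ((quatBasis m k : quatMatrices m) : Matrix (Fin m ⊕ Fin m) (Fin m ⊕ Fin m) ℂ)) := by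
  have hx : (x : Matrix (Fin m ⊕ Fin m) (Fin m ⊕ Fin m) ℂ) ∈
      Submodule.map (quatMatrices m).subtype
        (Submodule.span ℝ (Set.range (quatBasis m))) :=
    ⟨x, by rw [(quatBasis m).span_eq]; trivial, rfl⟩
  rwa [Submodule.map_span, ← Set.range_comp] at hx

private lemma quat_top_le_spanC :
    (⊤ : Submodule ℂ (Matrix (Fin m ⊕ Fin m) (Fin m ⊕ Fin m) ℂ)) ≤ Submodule.span ℂ
      (Set.range fun k : qIdx m =>
        ((quatBasis m k : quatMatrices m) : Matrix (Fin m ⊕ Fin m) (Fin m ⊕ Fin m) ℂ)) := by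
  intro A _
  set Z1 := (2:ℂ)⁻¹ • (A.toBlocks₁₁ + (A.toBlocks₂₂).map (starRingEnd ℂ)) with hZ1
  set Z2 := ((2:ℂ)⁻¹ * (-Complex.I)) • (A.toBlocks₁₁ - (A.toBlocks₂₂).map (starRingEnd ℂ)) with hZ2
  set W1 := (2:ℂ)⁻¹ • (A.toBlocks₁₂ - (A.toBlocks₂₁).map (starRingEnd ℂ)) with hW1
  set W2 := ((2:ℂ)⁻¹ * (-Complex.I)) • (A.toBlocks₁₂ + (A.toBlocks₂₁).map (starRingEnd ℂ)) with hW2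
  have hA : A = quatMk m (Z1, W1) + Complex.I • quatMk m (Z2, W2) := by
    ext i j
    cases i <;> cases j <;>
      simp only [quatMk, hZ1, hZ2, hW1, hW2, LinearMap.coe_mk, AddHom.coe_mk,
        Matrix.add_apply, Matrix.smul_apply, Matrix.fromBlocks_apply₁₁,
        Matrix.fromBlocks_apply₁₂, Matrix.fromBlocks_apply₂₁, Matrix.fromBlocks_apply₂₂,
        Matrix.map_apply, Matrix.neg_apply, Matrix.sub_apply, Matrix.toBlocks₁₁,
        Matrix.toBlocks₁₂, Matrix.toBlocks₂₁, Matrix.toBlocks₂₂, Matrix.of_apply,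
        smul_eq_mul, _root_.map_mul, _root_.map_add, _root_.map_sub, map_inv₀, map_ofNat, map_neg, Complex.conj_I,
        Complex.conj_conj, neg_neg, neg_mul, mul_neg]
    · linear_combination ((A (Sum.inl _) (Sum.inl _) -
        (starRingEnd ℂ) (A (Sum.inr _) (Sum.inr _))) / 2) * Complex.I_sq
    · linear_combination ((A (Sum.inl _) (Sum.inr _) +
        (starRingEnd ℂ) (A (Sum.inr _) (Sum.inl _))) / 2) * Complex.I_sq
    · linear_combination (((starRingEnd ℂ) (A (Sum.inl _) (Sum.inr _)) +
        A (Sum.inr _) (Sum.inl _)) / 2) * Complex.I_sq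
    · linear_combination ((A (Sum.inr _) (Sum.inr _) -
        (starRingEnd ℂ) (A (Sum.inl _) (Sum.inl _))) / 2) * Complex.I_sq
  rw [hA]
  have h1 : quatMk m (Z1, W1) ∈ Submodule.span ℂ
      (Set.range fun k : qIdx m =>
        ((quatBasis m k : quatMatrices m) : Matrix (Fin m ⊕ Fin m) (Fin m ⊕ Fin m) ℂ)) :=
    Submodule.span_subset_span ℝ ℂ _ (by rw [← coe_quatEquiv]; exact coe_mem_spanR _)
  have h2 : quatMk m (Z2, W2) ∈ Submodule.span ℂ
      (Set.range fun k : qIdx m =>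
        ((quatBasis m k : quatMatrices m) : Matrix (Fin m ⊕ Fin m) (Fin m ⊕ Fin m) ℂ)) :=
    Submodule.span_subset_span ℝ ℂ _ (by rw [← coe_quatEquiv]; exact coe_mem_spanR _)
  exact add_mem h1 (Submodule.smul_mem _ _ h2)

private noncomputable def quatBasisC (m : ℕ) :
    Module.Basis (qIdx m) ℂ (Matrix (Fin m ⊕ Fin m) (Fin m ⊕ Fin m) ℂ) :=
  basisOfTopLeSpanOfCardEqFinrank _ quat_top_le_spanC
    (by
      simp only [Fintype.card_sum, Fintype.card_prod, Fintype.card_fin,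
        Module.finrank_matrix, Fintype.card_sum, Module.finrank_self]
      ring)

open Kronecker in
private lemma det_quadratic (S : Matrix (Fin m ⊕ Fin m) (Fin m ⊕ Fin m) ℂ) :
    LinearMap.det ((LinearMap.mulRight ℂ S).comp (LinearMap.mulLeft ℂ S)) = S.det ^ (4 * m) := by
  have hrepr : ∀ (M : Matrix (Fin m ⊕ Fin m) (Fin m ⊕ Fin m) ℂ) i j,
      (Matrix.stdBasis ℂ (Fin m ⊕ Fin m) (Fin m ⊕ Fin m)).repr M (i, j) = M i j := by
    intro M i j; simp [Matrix.stdBasis]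
  rw [← LinearMap.det_toMatrix (Matrix.stdBasis ℂ (Fin m ⊕ Fin m) (Fin m ⊕ Fin m))]
  have hM : LinearMap.toMatrix (Matrix.stdBasis ℂ (Fin m ⊕ Fin m) (Fin m ⊕ Fin m))
      (Matrix.stdBasis ℂ (Fin m ⊕ Fin m) (Fin m ⊕ Fin m))
      ((LinearMap.mulRight ℂ S).comp (LinearMap.mulLeft ℂ S)) = S ⊗ₖ Sᵀ := by
    ext ⟨i, j⟩ ⟨p, q⟩
    rw [LinearMap.toMatrix_apply, Matrix.stdBasis_eq_single]
    rw [LinearMap.comp_apply, LinearMap.mulLeft_apply, LinearMap.mulRight_apply, hrepr]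
    simp [Matrix.mul_apply, Matrix.single, Finset.sum_ite_eq, ite_and]
  rw [hM, Matrix.det_kronecker, Matrix.det_transpose, ← pow_add]
  congr 1
  simp only [Fintype.card_sum, Fintype.card_fin]
  ring

/-- For `S` of quaternion type, the map `T ↦ S·T·S` maps the space of
quaternion-type matrices to itself, and its determinant as an ℝ-linear endomorphism of
that space equals `(det S)^(4m)` (with `det S` real). -/
theorem stmt_14 (m : ℕ) (hm : 1 ≤ m)
    (S : Matrix (Fin m ⊕ Fin m) (Fin m ⊕ Fin m) ℂ) (hS : S ∈ quatMatrices m) :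
    (∀ T ∈ quatMatrices m, S * T * S ∈ quatMatrices m)
    ∧ ∀ P : quatMatrices m →ₗ[ℝ] quatMatrices m,
        (∀ T : quatMatrices m, (P T : Matrix (Fin m ⊕ Fin m) (Fin m ⊕ Fin m) ℂ)
          = S * (T : Matrix (Fin m ⊕ Fin m) (Fin m ⊕ Fin m) ℂ) * S) →
        ((LinearMap.det P : ℝ) : ℂ) = S.det ^ (4 * m) := by
  classical
  constructor
  · intro T hT
    exact quat_mul_mem (quat_mul_mem hS hT) hS
  · intro P hP
    set bV := quatBasis m with hbV
    set bE := quatBasisC m with hbEdef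
    have hbE : ∀ k : qIdx m, bE k
        = ((bV k : quatMatrices m) : Matrix (Fin m ⊕ Fin m) (Fin m ⊕ Fin m) ℂ) := by
      intro k
      rw [hbEdef, quatBasisC]
      rw [coe_basisOfTopLeSpanOfCardEqFinrank]
    set Pt := (LinearMap.mulRight ℂ S).comp (LinearMap.mulLeft ℂ S) with hPtdef
    have hPtapp : ∀ x, Pt x = S * x * S := fun x => rfl
    have hmat : LinearMap.toMatrix bE bE Pt
        = (LinearMap.toMatrix bV bV P).map (algebraMap ℝ ℂ) := by
      ext k l
      rw [Matrix.map_apply, LinearMap.toMatrix_apply, LinearMap.toMatrix_apply]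
      have h1 : Pt (bE l) = ((P (bV l) : quatMatrices m)
          : Matrix (Fin m ⊕ Fin m) (Fin m ⊕ Fin m) ℂ) := by
        rw [hbE l, hPtapp, ← hP (bV l)]
      have h2 : ((P (bV l) : quatMatrices m)
            : Matrix (Fin m ⊕ Fin m) (Fin m ⊕ Fin m) ℂ)
          = ∑ k' : qIdx m, (algebraMap ℝ ℂ ((bV.repr (P (bV l))) k')) • bE k' := by
        conv_lhs => rw [← bV.sum_repr (P (bV l))]
        rw [Submodule.coe_sum]
        refine Finset.sum_congr rfl fun k' _ => ?_
        rw [Submodule.coe_smul, algebraMap_smul, hbE k']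
      rw [h1, h2, Module.Basis.repr_sum_self]
    have : ((LinearMap.det P : ℝ) : ℂ) = algebraMap ℝ ℂ (LinearMap.det P) := rfl
    rw [this, ← LinearMap.det_toMatrix bV P, RingHom.map_det,
      RingHom.mapMatrix_apply, ← hmat, LinearMap.det_toMatrix]
    exact det_quadratic S
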